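/- The set of d-tuples (a₁,…,a_d) of continuous nowhere-vanishing functions S¹ → ℝ with the following property is open and dense in the space of such d-tuples equipped with the sup distance max_i sup_t |a_i(t) − b_i(t)|: setting λ_i = ∫₀¹ log|a_i(s)| ds, for every 1 ≤ j ≤ d−1 and all distinct j-element subsets I ≠ J of {1,…,d} one has Σ_{i∈I} λ_i ≠ Σ_{i∈J} λ_i. -/

import Mathlib

open MeasureTheory Filter

/-- A `d`-tuple of continuous, 1-periodic, nowhere-vanishing functions `S¹ → ℝ`. -/
def IsNVTuple {d : ℕ} (a : Fin d → ℝ → ℝ) : Prop :=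
  ∀ i, Continuous (a i) ∧ (∀ t, a i (t + 1) = a i t) ∧ ∀ t, a i t ≠ 0

/-- sup distance on `d`-tuples of functions. -/
noncomputable def dSupT {d : ℕ} (a b : Fin d → ℝ → ℝ) : ℝ :=
  ⨆ i, ⨆ t : Set.Icc (0:ℝ) 1, |a i t - b i t|

/-- The pinching condition for the diagonal cocycle `diag(a₁,…,a_d)`: with
`λ_i = ∫₀¹ log|a_i|`, all sums `Σ_{i∈I} λ_i` over `j`-element index sets, `1 ≤ j ≤ d−1`,
are pairwise distinct. -/
def PinchingTuple {d : ℕ} (a : Fin d → ℝ → ℝ) : Prop :=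
  ∀ I J : Finset (Fin d), 1 ≤ I.card → I.card ≤ d - 1 → I.card = J.card → I ≠ J →
    (∑ i ∈ I, ∫ s in (0:ℝ)..1, Real.log |a i s|) ≠
      ∑ i ∈ J, ∫ s in (0:ℝ)..1, Real.log |a i s|

lemma exists_pos_lb {f : ℝ → ℝ} (hc : Continuous f) (h0 : ∀ t, f t ≠ 0) :
    ∃ m > 0, ∀ t ∈ Set.Icc (0:ℝ) 1, m ≤ |f t| := by
  obtain ⟨t0, ht0, hmin⟩ := (isCompact_Icc (a := (0:ℝ)) (b := 1)).exists_isMinOn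
    (Set.nonempty_Icc.2 zero_le_one) hc.abs.continuousOn
  exact ⟨|f t0|, abs_pos.2 (h0 t0), fun t ht => isMinOn_iff.1 hmin t ht⟩

lemma abs_log_sub_log_le {m x y : ℝ} (hm : 0 < m) (hx : m ≤ x) (hy : m ≤ y) :
    |Real.log x - Real.log y| ≤ |x - y| / m := by
  wlog h : y ≤ x
  · rw [abs_sub_comm, abs_sub_comm x y]; exact this hm hy hx (le_of_not_ge h)
  have hy0 : 0 < y := hm.trans_le hy
  have hx0 : 0 < x := hm.trans_le hx
  rw [abs_of_nonneg (sub_nonneg.2 (Real.log_le_log hy0 h)),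
    abs_of_nonneg (sub_nonneg.2 h), ← Real.log_div (ne_of_gt hx0) (ne_of_gt hy0)]
  calc Real.log (x/y) ≤ x/y - 1 := Real.log_le_sub_one_of_pos (by positivity)
    _ = (x - y)/y := by field_simp
    _ ≤ (x - y)/m := by gcongr

lemma integral_log_abs_sub_le {f g : ℝ → ℝ} (hf : Continuous f) (hg : Continuous g)
    (hf0 : ∀ t, f t ≠ 0) (hg0 : ∀ t, g t ≠ 0) {m ε : ℝ} (hm : 0 < m)
    (hfm : ∀ t ∈ Set.Icc (0:ℝ) 1, m ≤ |f t|) (hgm : ∀ t ∈ Set.Icc (0:ℝ) 1, m ≤ |g t|)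
    (hfg : ∀ t ∈ Set.Icc (0:ℝ) 1, |f t - g t| ≤ ε) :
    abs ((∫ s in (0:ℝ)..1, Real.log (abs (f s))) - ∫ s in (0:ℝ)..1, Real.log (abs (g s)))
      ≤ ε / m := by
  have hif : IntervalIntegrable (fun s => Real.log |f s|) volume 0 1 :=
    (hf.abs.log (fun t => abs_ne_zero.2 (hf0 t))).intervalIntegrable 0 1
  have hig : IntervalIntegrable (fun s => Real.log |g s|) volume 0 1 :=
    (hg.abs.log (fun t => abs_ne_zero.2 (hg0 t))).intervalIntegrable 0 1
  rw [← intervalIntegral.integral_sub hif hig]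
  have key : ∀ x ∈ Set.uIoc (0:ℝ) 1,
      ‖Real.log (abs (f x)) - Real.log (abs (g x))‖ ≤ ε / m := by
    intro x hx
    rw [Set.uIoc_of_le zero_le_one] at hx
    have hx' : x ∈ Set.Icc (0:ℝ) 1 := ⟨le_of_lt hx.1, hx.2⟩
    have h1 : abs (Real.log (abs (f x)) - Real.log (abs (g x)))
        ≤ abs (abs (f x) - abs (g x)) / m :=
      abs_log_sub_log_le hm (hfm x hx') (hgm x hx')
    refine h1.trans ?_
    have h2 : abs (abs (f x) - abs (g x)) ≤ ε :=
      (abs_abs_sub_abs_le_abs_sub _ _).trans (hfg x hx')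
    gcongr
  have := intervalIntegral.norm_integral_le_of_norm_le_const
    (a := (0:ℝ)) (b := 1) (C := ε / m)
    (f := fun s => Real.log (abs (f s)) - Real.log (abs (g s))) key
  simpa using this

lemma abs_le_dSupT {d : ℕ} {a b : Fin d → ℝ → ℝ} (ha : ∀ i, Continuous (a i))
    (hb : ∀ i, Continuous (b i)) (i : Fin d) {t : ℝ} (ht : t ∈ Set.Icc (0:ℝ) 1) :
    |a i t - b i t| ≤ dSupT a b := by
  have hne : Nonempty (Set.Icc (0:ℝ) 1) := ⟨⟨0, by norm_num⟩⟩
  have hbdd : ∀ j : Fin d, BddAbove (Set.range fun s : Set.Icc (0:ℝ) 1 => |a j s - b j s|) := by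
    intro j
    have : (Set.range fun s : Set.Icc (0:ℝ) 1 => |a j s - b j s|)
        = (fun s : ℝ => |a j s - b j s|) '' Set.Icc 0 1 := by
      ext x; simp [Set.mem_image]
    rw [this]
    exact (isCompact_Icc.image_of_continuousOn
      (((ha j).sub (hb j)).abs.continuousOn)).bddAbove
  have h1 : |a i t - b i t| ≤ ⨆ s : Set.Icc (0:ℝ) 1, |a i s - b i s| :=
    le_ciSup (hbdd i) (⟨t, ht⟩ : Set.Icc (0:ℝ) 1)
  refine h1.trans ?_
  exact le_ciSup (f := fun j => ⨆ s : Set.Icc (0:ℝ) 1, |a j s - b j s|)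
    (Set.finite_range _).bddAbove i

lemma dSupT_le {d : ℕ} {a b : Fin d → ℝ → ℝ} {C : ℝ} (hC : 0 ≤ C)
    (h : ∀ i, ∀ t ∈ Set.Icc (0:ℝ) 1, |a i t - b i t| ≤ C) : dSupT a b ≤ C :=
  Real.iSup_le (fun i => Real.iSup_le (fun t => h i t t.2) hC) hC

lemma sum_pow_three_ne {d : ℕ} {I J : Finset (Fin d)} (h : I ≠ J) :
    (∑ i ∈ I, (3:ℝ) ^ (i : ℕ)) ≠ ∑ i ∈ J, (3:ℝ) ^ (i : ℕ) := by
  intro he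
  apply h
  have hn : (∑ i ∈ I.map Fin.valEmbedding, (3:ℕ) ^ i)
      = ∑ i ∈ J.map Fin.valEmbedding, (3:ℕ) ^ i := by
    have : ((∑ i ∈ I.map Fin.valEmbedding, (3:ℕ) ^ i : ℕ) : ℝ)
        = ((∑ i ∈ J.map Fin.valEmbedding, (3:ℕ) ^ i : ℕ) : ℝ) := by
      push_cast
      rw [Finset.sum_map, Finset.sum_map]
      simpa using he
    exact_mod_cast this
  have := Finset.geomSum_injective (by norm_num : 2 ≤ 3) hn
  exact Finset.map_injective Fin.valEmbedding this

lemma log_scale_integral {f : ℝ → ℝ} (hf : Continuous f) (hf0 : ∀ t, f t ≠ 0) (c : ℝ) :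
    (∫ s in (0:ℝ)..1, Real.log (abs (Real.exp c * f s)))
      = c + ∫ s in (0:ℝ)..1, Real.log (abs (f s)) := by
  have hif : IntervalIntegrable (fun s => Real.log (abs (f s))) volume 0 1 :=
    (hf.abs.log (fun t => abs_ne_zero.2 (hf0 t))).intervalIntegrable 0 1
  have heq : ∀ s : ℝ, Real.log (abs (Real.exp c * f s)) = c + Real.log (abs (f s)) := by
    intro s
    rw [abs_mul, abs_of_pos (Real.exp_pos c), Real.log_mul (Real.exp_ne_zero c)
      (abs_ne_zero.2 (hf0 s)), Real.log_exp]
  simp only [heq]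
  rw [intervalIntegral.integral_add (intervalIntegrable_const) hif]
  simp

set_option maxHeartbeats 1000000 in
/-- The pinching tuples form an open and dense subset of the `d`-tuples of continuous
nowhere-vanishing functions `S¹ → ℝ`, for the sup distance. -/
theorem pinching_open_dense (d : ℕ) :
    -- openness
    (∀ a : Fin d → ℝ → ℝ, IsNVTuple a → PinchingTuple a →
      ∃ ε > 0, ∀ b, IsNVTuple b → dSupT a b < ε → PinchingTuple b) ∧
    -- density
    (∀ a : Fin d → ℝ → ℝ, IsNVTuple a → ∀ ε > 0,
      ∃ b, IsNVTuple b ∧ dSupT a b < ε ∧ PinchingTuple b) := by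
  constructor
  · -- openness
    intro a ha hpa
    classical
    set S : Finset (Finset (Fin d) × Finset (Fin d)) :=
      Finset.univ.filter (fun p => 1 ≤ p.1.card ∧ p.1.card ≤ d - 1 ∧
        p.1.card = p.2.card ∧ p.1 ≠ p.2) with hSdef
    by_cases hS : S.Nonempty
    · -- nontrivial case
      obtain ⟨p0, hp0⟩ := hS
      have hp0' := Finset.mem_filter.1 hp0
      obtain ⟨i0, hi0⟩ := Finset.card_pos.1 (lt_of_lt_of_le one_pos (hp0'.2.1))
      have hFin : Nonempty (Fin d) := ⟨i0⟩
      -- lower bounds on |a i|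
      choose m hmpos hmle using fun i => exists_pos_lb (ha i).1 (ha i).2.2
      set m0 : ℝ := Finset.univ.inf' Finset.univ_nonempty m with hm0def
      have hm0pos : 0 < m0 := by
        rw [hm0def, Finset.lt_inf'_iff]
        exact fun i _ => hmpos i
      have hm0le : ∀ i, m0 ≤ m i := fun i => Finset.inf'_le _ (Finset.mem_univ i)
      -- the gap
      set lam : Fin d → ℝ := fun i => ∫ s in (0:ℝ)..1, Real.log |a i s| with hlamdef
      set δ : ℝ := S.inf' ⟨p0, hp0⟩ (fun p => |(∑ i ∈ p.1, lam i) - ∑ i ∈ p.2, lam i|)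
        with hδdef
      have hδpos : 0 < δ := by
        rw [hδdef]; apply (Finset.lt_inf'_iff _).2
        intro p hp
        have hp' := Finset.mem_filter.1 hp
        have := hpa p.1 p.2 hp'.2.1 hp'.2.2.1 hp'.2.2.2.1 hp'.2.2.2.2
        exact abs_pos.2 (sub_ne_zero.2 this)
      refine ⟨min (m0/2) (δ*m0/(8*(d+1))), by positivity, fun b hb hdist => ?_⟩
      set ε : ℝ := min (m0/2) (δ*m0/(8*(d+1))) with hεdef
      have hεm : ε ≤ m0/2 := min_le_left _ _
      have hεδ : ε ≤ δ*m0/(8*(d+1)) := min_le_right _ _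
      -- pointwise bound
      have hpt : ∀ i, ∀ t ∈ Set.Icc (0:ℝ) 1, |a i t - b i t| ≤ ε := by
        intro i t ht
        exact le_of_lt (lt_of_le_of_lt
          (abs_le_dSupT (fun j => (ha j).1) (fun j => (hb j).1) i ht) hdist)
      -- lower bound on b
      have hbm : ∀ i, ∀ t ∈ Set.Icc (0:ℝ) 1, m0/2 ≤ |b i t| := by
        intro i t ht
        have h1 : m0 ≤ |a i t| := (hm0le i).trans (hmle i t ht)
        have h2 : |a i t| - |b i t| ≤ |a i t - b i t| := abs_sub_abs_le_abs_sub _ _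
        have h3 := hpt i t ht
        linarith
      have ham : ∀ i, ∀ t ∈ Set.Icc (0:ℝ) 1, m0/2 ≤ |a i t| := by
        intro i t ht
        have := (hm0le i).trans (hmle i t ht); linarith
      -- integral difference bound
      set lamb : Fin d → ℝ := fun i => ∫ s in (0:ℝ)..1, Real.log |b i s| with hlambdef
      have hint : ∀ i, abs (lam i - lamb i) ≤ ε / (m0/2) := by
        intro i
        exact integral_log_abs_sub_le (ha i).1 (hb i).1 (ha i).2.2 (hb i).2.2
          (by positivity) (ham i) (hbm i) (hpt i)
      have hE : ε / (m0/2) ≤ δ / (4*(d+1)) := by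
        rw [div_le_div_iff₀ (by positivity) (by positivity)]
        have : ε * (4*(d+1)) ≤ (δ*m0/(8*(d+1))) * (4*(d+1)) := by
          gcongr
        calc ε * (4*((d:ℝ)+1)) ≤ (δ*m0/(8*(d+1))) * (4*(d+1)) := this
          _ = δ * m0 / 2 := by field_simp; ring
          _ ≤ δ * (m0/2) := by rw [mul_div_assoc]
      have hsum : ∀ I : Finset (Fin d), |(∑ i ∈ I, lam i) - ∑ i ∈ I, lamb i| ≤ δ/4 := by
        intro I
        rw [← Finset.sum_sub_distrib]
        refine (Finset.abs_sum_le_sum_abs _ _).trans ?_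
        have h1 : ∑ i ∈ I, |lam i - lamb i| ≤ ∑ _i ∈ I, δ/(4*(d+1)) :=
          Finset.sum_le_sum (fun i _ => (hint i).trans hE)
        refine h1.trans ?_
        rw [Finset.sum_const, nsmul_eq_mul]
        have hcard : (I.card : ℝ) ≤ d := by
          exact_mod_cast Nat.cast_le.2 (I.card_le_univ.trans (by simp))
        calc (I.card : ℝ) * (δ/(4*(d+1))) ≤ d * (δ/(4*(d+1))) := by
              gcongr
          _ ≤ (d+1) * (δ/(4*(d+1))) := by gcongr; linarith
          _ = δ/4 := by field_simp
      -- conclude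
      intro I J h1 h2 h3 h4
      intro heq
      have hmem : (I, J) ∈ S := Finset.mem_filter.2 ⟨Finset.mem_univ _, h1, h2, h3, h4⟩
      have hδle : δ ≤ |(∑ i ∈ I, lam i) - ∑ i ∈ J, lam i| :=
        Finset.inf'_le _ hmem
      have hI := hsum I
      have hJ := hsum J
      have hBeq : (∑ i ∈ I, lamb i) = ∑ i ∈ J, lamb i := heq
      have htri : |(∑ i ∈ I, lam i) - ∑ i ∈ J, lam i|
          ≤ |(∑ i ∈ I, lam i) - ∑ i ∈ I, lamb i| + |(∑ i ∈ J, lam i) - ∑ i ∈ J, lamb i| := by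
        have he : (∑ i ∈ I, lam i) - ∑ i ∈ J, lam i
            = ((∑ i ∈ I, lam i) - ∑ i ∈ I, lamb i) - ((∑ i ∈ J, lam i) - ∑ i ∈ J, lamb i) := by
          rw [hBeq]; ring
        rw [he]
        exact abs_sub _ _
      linarith
    · -- trivial case: no admissible pairs
      refine ⟨1, one_pos, fun b hb hdist I J h1 h2 h3 h4 => ?_⟩
      exact absurd ⟨(I, J), Finset.mem_filter.2 ⟨Finset.mem_univ _, h1, h2, h3, h4⟩⟩ hS
  · -- density
    intro a ha ε hε
    classical
    set lam : Fin d → ℝ := fun i => ∫ s in (0:ℝ)..1, Real.log |a i s| with hlamdef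
    -- upper bound on |a i| on [0,1]
    choose M hM using fun i =>
      isCompact_Icc.exists_bound_of_continuousOn ((ha i).1.continuousOn (s := Set.Icc 0 1))
    set Mt : ℝ := 1 + ∑ i, |M i| with hMtdef
    have hMt1 : (1:ℝ) ≤ Mt := by
      rw [hMtdef]
      have : (0:ℝ) ≤ ∑ i, |M i| := Finset.sum_nonneg (fun i _ => abs_nonneg _)
      linarith
    have hMt : ∀ i, ∀ t ∈ Set.Icc (0:ℝ) 1, |a i t| ≤ Mt := by
      intro i t ht
      have h1 : |a i t| ≤ M i := by simpa [Real.norm_eq_abs] using hM i t ht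
      have h2 : M i ≤ |M i| := le_abs_self _
      have h3 : |M i| ≤ ∑ j, |M j| :=
        Finset.single_le_sum (fun j _ => abs_nonneg (M j)) (Finset.mem_univ i)
      rw [hMtdef]; linarith
    set C : ℝ := (3:ℝ)^d with hCdef
    set cc : Fin d → ℝ := fun i => (3:ℝ)^(i:ℕ) with hccdef
    have hccpos : ∀ i, 0 < cc i := fun i => by positivity
    have hccle : ∀ i, cc i ≤ C := by
      intro i
      rw [hccdef, hCdef]
      exact pow_le_pow_right₀ (by norm_num) (le_of_lt i.2)
    -- small r
    have hcont : Continuous (fun r : ℝ => (Real.exp (r * C) - 1) * Mt) :=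
      ((Real.continuous_exp.comp (continuous_id.mul continuous_const)).sub
        continuous_const).mul continuous_const
    have h0 : Tendsto (fun r : ℝ => (Real.exp (r * C) - 1) * Mt) (nhds 0) (nhds 0) := by
      have := hcont.tendsto 0
      simpa using this
    have hev : ∀ᶠ r in nhds (0:ℝ), (Real.exp (r * C) - 1) * Mt < ε :=
      h0.eventually (gt_mem_nhds hε)
    obtain ⟨δm, hδm, hδ⟩ := Metric.eventually_nhds_iff.1 hev
    -- bad set
    set Bad : Finset ℝ := Finset.image
      (fun p : Finset (Fin d) × Finset (Fin d) =>
        ((∑ i ∈ p.2, lam i) - ∑ i ∈ p.1, lam i) / ((∑ i ∈ p.1, cc i) - ∑ i ∈ p.2, cc i))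
      Finset.univ with hBaddef
    obtain ⟨r, hrIoo, hrBad⟩ := (Set.Ioo_infinite hδm).exists_notMem_finset Bad
    have hr0 : 0 < r := hrIoo.1
    have hrδ : r < δm := hrIoo.2
    -- the perturbed tuple
    refine ⟨fun i t => Real.exp (r * cc i) * a i t, ?_, ?_, ?_⟩
    · intro i
      exact ⟨continuous_const.mul (ha i).1,
        fun t => by simp only [(ha i).2.1 t],
        fun t => mul_ne_zero (Real.exp_ne_zero _) ((ha i).2.2 t)⟩
    · -- distance
      have hpt : ∀ i, ∀ t ∈ Set.Icc (0:ℝ) 1,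
          |a i t - Real.exp (r * cc i) * a i t| ≤ (Real.exp (r * C) - 1) * Mt := by
        intro i t ht
        have heq : a i t - Real.exp (r * cc i) * a i t = (1 - Real.exp (r * cc i)) * a i t := by
          ring
        rw [heq, abs_mul]
        have h1 : (1:ℝ) ≤ Real.exp (r * cc i) := by
          rw [← Real.exp_zero]
          exact Real.exp_le_exp.2 (by positivity)
        have h2 : |1 - Real.exp (r * cc i)| = Real.exp (r * cc i) - 1 := by
          rw [abs_sub_comm, abs_of_nonneg (by linarith)]
        rw [h2]
        have h3 : Real.exp (r * cc i) - 1 ≤ Real.exp (r * C) - 1 := by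
          have : Real.exp (r * cc i) ≤ Real.exp (r * C) :=
            Real.exp_le_exp.2 (by have := hccle i; nlinarith [hccpos i])
          linarith
        exact mul_le_mul h3 (hMt i t ht) (abs_nonneg _) (by linarith)
      have hlt : (Real.exp (r * C) - 1) * Mt < ε := by
        have := hδ (show dist r 0 < δm by
          rw [Real.dist_eq, sub_zero, abs_of_pos hr0]; exact hrδ)
        exact this
      exact lt_of_le_of_lt (dSupT_le (by
        have h1 : (1:ℝ) ≤ Real.exp (r * C) := by
          rw [← Real.exp_zero]
          refine Real.exp_le_exp.2 ?_
          positivity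
        nlinarith) hpt) hlt
    · -- pinching
      intro I J h1 h2 h3 h4
      have hlamb : ∀ i, (∫ s in (0:ℝ)..1, Real.log |Real.exp (r * cc i) * a i s|)
          = r * cc i + lam i := fun i => log_scale_integral (ha i).1 (ha i).2.2 _
      intro heq
      simp only [hlamb] at heq
      rw [Finset.sum_add_distrib, Finset.sum_add_distrib, ← Finset.mul_sum,
        ← Finset.mul_sum] at heq
      have hcne : (∑ i ∈ I, cc i) ≠ ∑ i ∈ J, cc i := sum_pow_three_ne h4
      have hrval : r = ((∑ i ∈ J, lam i) - ∑ i ∈ I, lam i)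
          / ((∑ i ∈ I, cc i) - ∑ i ∈ J, cc i) := by
        rw [eq_div_iff (sub_ne_zero.2 hcne)]
        linarith
      apply hrBad
      rw [hBaddef]
      exact Finset.mem_image.2 ⟨(I, J), Finset.mem_univ _, hrval.symm⟩
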